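/- Let φ = (1+√5)/2 and Φ = (1-√5)/2, and let α = (α_i)_{i≥0} and β = (β_i)_{i≥0} be the real sequences with α_i = (2^i - 1)Φ + 1 and β_i = (2^i - 1)φ + 1. Then for every positive integer n, det(P_{α,β}(n)) = F(n+1), where F denotes the Fibonacci sequence with F(0) = 0, F(1) = 1. -/

import Mathlib

open Matrix

/-- Entry `P_{i,j}` of the generalized Pascal triangle associated to sequences `α`, `β`:
`P_{i,0} = α i`, `P_{0,j} = β j`, and `P_{i,j} = P_{i-1,j} + P_{i,j-1}` for `i, j ≥ 1`. -/
def pascalEntry {R : Type*} [CommRing R] (α β : ℕ → R) : ℕ → ℕ → R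
  | i, 0 => α i
  | 0, j + 1 => β (j + 1)
  | i + 1, j + 1 => pascalEntry α β i (j + 1) + pascalEntry α β (i + 1) j

/-- The generalized Pascal triangle `P_{α,β}(n)`. -/
def genPascal {R : Type*} [CommRing R] (α β : ℕ → R) (n : ℕ) :
    Matrix (Fin n) (Fin n) R :=
  Matrix.of fun i j => pascalEntry α β (i : ℕ) (j : ℕ)

/-- The Töplitz matrix `T_{α,β}(n)`: `t_{i,j} = α_{i-j}` if `i ≥ j`, else `β_{j-i}`. -/
def toeplitz {R : Type*} [CommRing R] (α β : ℕ → R) (n : ℕ) :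
    Matrix (Fin n) (Fin n) R :=
  Matrix.of fun i j => if (j : ℕ) ≤ (i : ℕ) then α ((i : ℕ) - (j : ℕ)) else β ((j : ℕ) - (i : ℕ))

/-- The unipotent lower triangular matrix `L(n)` with `L_{i,j} = C(i,j)` for `i ≥ j`. -/
def lowerL (R : Type*) [CommRing R] (n : ℕ) : Matrix (Fin n) (Fin n) R :=
  Matrix.of fun i j => if (j : ℕ) ≤ (i : ℕ) then ((i : ℕ).choose (j : ℕ) : R) else 0

/-- The binomial inverse transform `α̂_i = ∑_{k=0}^{i} (-1)^{i+k} C(i,k) α_k`. -/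
def hatSeq {R : Type*} [CommRing R] (α : ℕ → R) (i : ℕ) : R :=
  ∑ k ∈ Finset.range (i + 1), (-1 : R) ^ (i + k) * (i.choose k : R) * α k

/-- The binomial transform `α̌_i = ∑_{k=0}^{i} C(i,k) α_k`. -/
def checkSeq {R : Type*} [CommRing R] (α : ℕ → R) (i : ℕ) : R :=
  ∑ k ∈ Finset.range (i + 1), (i.choose k : R) * α k


noncomputable section
namespace DGG


def gr : ℝ := (1 + Real.sqrt 5) / 2
def gc : ℝ := (1 - Real.sqrt 5) / 2

lemma sqrt5_sq : Real.sqrt 5 * Real.sqrt 5 = 5 :=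
  Real.mul_self_sqrt (by norm_num)

lemma gr_add_gc : gr + gc = 1 := by unfold gr gc; ring

lemma gr_mul_gc : gr * gc = -1 := by
  unfold gr gc
  have := sqrt5_sq
  nlinarith [sqrt5_sq]

lemma gr_sq : gr * gr = gr + 1 := by
  have h1 := gr_add_gc; have h2 := gr_mul_gc; nlinarith

lemma gc_sq : gc * gc = gc + 1 := by
  have h1 := gr_add_gc; have h2 := gr_mul_gc; nlinarith

lemma fibR_pos (k : ℕ) : (0 : ℝ) < (Nat.fib (k + 1) : ℝ) := by
  exact_mod_cast Nat.fib_pos.mpr (Nat.succ_pos k)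

lemma fibR_ne (k : ℕ) : ((Nat.fib (k + 1) : ℝ)) ≠ 0 := ne_of_gt (fibR_pos k)

/-- Binet-type: `F(n+1) = gr·F(n) + gc^n`. -/
lemma binet1 (n : ℕ) : (Nat.fib (n + 1) : ℝ) = gr * (Nat.fib n : ℝ) + gc ^ n := by
  induction n with
  | zero => simp
  | succ m ih =>
    have h : (Nat.fib (m + 2) : ℝ) = (Nat.fib (m+1) : ℝ) + (Nat.fib m : ℝ) := by
      rw [Nat.fib_add_two]; push_cast; ring
    rw [h, ih]
    have hgg : gr * gc = -1 := gr_mul_gc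
    have hs : gr + gc = 1 := gr_add_gc
    have : gr * (gr * (Nat.fib m : ℝ) + gc ^ m) + gc ^ (m+1)
        = (gr*gr) * (Nat.fib m : ℝ) + gc ^ m * (gr + gc) := by ring
    rw [this, gr_sq, hs]
    ring

lemma binet2 (n : ℕ) : (Nat.fib (n + 1) : ℝ) = gc * (Nat.fib n : ℝ) + gr ^ n := by
  induction n with
  | zero => simp
  | succ m ih =>
    have h : (Nat.fib (m + 2) : ℝ) = (Nat.fib (m+1) : ℝ) + (Nat.fib m : ℝ) := by
      rw [Nat.fib_add_two]; push_cast; ring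
    rw [h, ih]
    have hs : gr + gc = 1 := gr_add_gc
    have : gc * (gc * (Nat.fib m : ℝ) + gr ^ m) + gr ^ (m+1)
        = (gc*gc) * (Nat.fib m : ℝ) + gr ^ m * (gr + gc) := by ring
    rw [this, gc_sq, hs]
    ring

lemma prod_fib_ratio (n : ℕ) :
    ∏ k ∈ Finset.range n, ((Nat.fib (k+2) : ℝ) / (Nat.fib (k+1) : ℝ)) = (Nat.fib (n+1) : ℝ) := by
  induction n with
  | zero => simp
  | succ m ih =>
    rw [Finset.prod_range_succ, ih, div_eq_mul_inv]
    field_simp [fibR_ne m]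




/-- hat sequences -/
def a : ℕ → ℝ := fun k => if k = 0 then 1 else gc
def b : ℕ → ℝ := fun k => if k = 0 then 1 else gr

/-- toeplitz entry on ℕ -/
def t : ℕ → ℕ → ℝ := fun k l => if l ≤ k then a (k - l) else b (l - k)

lemma t_shift (k l : ℕ) : t (k+1) (l+1) = t k l := by
  unfold t
  simp [Nat.succ_le_succ_iff, Nat.succ_sub_succ]

lemma t_zero_right (k : ℕ) : t k 0 = a k := by simp [t]

lemma t_zero_left (l : ℕ) : t 0 l = b l := by
  unfold t a b
  rcases Nat.eq_zero_or_pos l with h | h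
  · subst h; simp
  · rw [if_neg (by omega)]
    simp

/-- binomial step -/
lemma binom_step (i : ℕ) (u : ℕ → ℝ) :
    ∑ k ∈ Finset.range (i+2), ((i+1).choose k : ℝ) * u k
      = ∑ k ∈ Finset.range (i+1), (i.choose k : ℝ) * (u k + u (k+1)) := by
  rw [Finset.sum_range_succ' (fun k => ((i+1).choose k : ℝ) * u k) (i+1)]
  have h1 : ∀ k, ((i+1).choose (k+1) : ℝ) = (i.choose k : ℝ) + (i.choose (k+1) : ℝ) := by
    intro k; rw [Nat.choose_succ_succ]; push_cast; ring
  have : ∑ k ∈ Finset.range (i+1), ((i+1).choose (k+1) : ℝ) * u (k+1)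
      = ∑ k ∈ Finset.range (i+1), (i.choose k : ℝ) * u (k+1)
        + ∑ k ∈ Finset.range (i+1), (i.choose (k+1) : ℝ) * u (k+1) := by
    rw [← Finset.sum_add_distrib]
    refine Finset.sum_congr rfl fun k _ => by rw [h1]; ring
  rw [this]
  have h2 : ∑ k ∈ Finset.range (i+1), (i.choose (k+1) : ℝ) * u (k+1) + ((i+1).choose 0 : ℝ) * u 0
      = ∑ k ∈ Finset.range (i+1), (i.choose k : ℝ) * u k := by
    have := Finset.sum_range_succ' (fun k => (i.choose k : ℝ) * u k) (i+1)
    -- ∑_{range(i+2)} = ∑_{range(i+1)} shifted + first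
    rw [Finset.sum_range_succ (fun k => (i.choose k : ℝ) * u k) (i+1)] at this
    simp only [Nat.choose_succ_self, Nat.cast_zero, zero_mul, add_zero] at this
    simpa using this.symm
  rw [add_assoc, h2, ← Finset.sum_add_distrib]
  refine Finset.sum_congr rfl fun k _ => by ring

/-- the double-sum function -/
def G : ℕ → ℕ → ℝ := fun i j =>
  ∑ k ∈ Finset.range (i+1), (i.choose k : ℝ) *
    ∑ l ∈ Finset.range (j+1), (j.choose l : ℝ) * t k l

lemma G_rec (i j : ℕ) : G (i+1) (j+1) = G i (j+1) + G (i+1) j := by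
  unfold G
  rw [binom_step i (fun k => ∑ l ∈ Finset.range (j+2), ((j+1).choose l : ℝ) * t k l)]
  rw [binom_step i (fun k => ∑ l ∈ Finset.range (j+1), (j.choose l : ℝ) * t k l)]
  rw [← Finset.sum_add_distrib]
  refine Finset.sum_congr rfl fun k _ => ?_
  rw [binom_step j (fun l => t k l), binom_step j (fun l => t (k+1) l)]
  have h2 : ∑ l ∈ Finset.range (j+1), (j.choose l : ℝ) * (t (k+1) l + t (k+1) (l+1))
      = ∑ l ∈ Finset.range (j+1), (j.choose l : ℝ) * t k l
        + ∑ l ∈ Finset.range (j+1), (j.choose l : ℝ) * t (k+1) l := by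
    rw [← Finset.sum_add_distrib]
    refine Finset.sum_congr rfl fun l _ => ?_
    rw [← t_shift k l]
    ring
  rw [h2]
  ring

/-- boundary values -/
lemma sum_choose_a (i : ℕ) :
    ∑ k ∈ Finset.range (i+1), (i.choose k : ℝ) * a k = ((2:ℝ)^i - 1) * gc + 1 := by
  have h : ∀ k ∈ Finset.range (i+1), (i.choose k : ℝ) * a k
      = (i.choose k : ℝ) * gc + (if k = 0 then (1 - gc) else 0) := by
    intro k _
    rcases Nat.eq_zero_or_pos k with h | h
    · subst h; simp [a]
    · simp [a, Nat.pos_iff_ne_zero.mp h]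
  rw [Finset.sum_congr rfl h, Finset.sum_add_distrib, ← Finset.sum_mul]
  have h2 : ∑ k ∈ Finset.range (i+1), (i.choose k : ℝ) = (2:ℝ)^i := by
    rw [← Nat.cast_sum]
    rw [Nat.sum_range_choose]
    push_cast; ring
  rw [h2, Finset.sum_ite_eq' (Finset.range (i+1)) 0 (fun _ => (1 : ℝ) - gc)]
  simp; ring

lemma sum_choose_b (i : ℕ) :
    ∑ k ∈ Finset.range (i+1), (i.choose k : ℝ) * b k = ((2:ℝ)^i - 1) * gr + 1 := by
  have h : ∀ k ∈ Finset.range (i+1), (i.choose k : ℝ) * b k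
      = (i.choose k : ℝ) * gr + (if k = 0 then (1 - gr) else 0) := by
    intro k _
    rcases Nat.eq_zero_or_pos k with h | h
    · subst h; simp [b]
    · simp [b, Nat.pos_iff_ne_zero.mp h]
  rw [Finset.sum_congr rfl h, Finset.sum_add_distrib, ← Finset.sum_mul]
  have h2 : ∑ k ∈ Finset.range (i+1), (i.choose k : ℝ) = (2:ℝ)^i := by
    rw [← Nat.cast_sum, Nat.sum_range_choose]
    push_cast; ring
  rw [h2, Finset.sum_ite_eq' (Finset.range (i+1)) 0 (fun _ => (1 : ℝ) - gr)]
  simp; ring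

lemma G_left (i : ℕ) : G i 0 = ((2:ℝ)^i - 1) * gc + 1 := by
  unfold G
  rw [← sum_choose_a i]
  refine Finset.sum_congr rfl fun k _ => ?_
  simp [t_zero_right]

lemma G_right (j : ℕ) : G 0 j = ((2:ℝ)^j - 1) * gr + 1 := by
  unfold G
  rw [← sum_choose_b j]
  rw [Finset.range_one, Finset.sum_singleton]
  simp only [Nat.choose_self, Nat.cast_one, one_mul, Nat.choose_zero_right]
  refine Finset.sum_congr rfl fun l _ => ?_
  rw [t_zero_left]



lemma pascal_eq_G : ∀ i j : ℕ,
    pascalEntry (fun i => ((2:ℝ)^i - 1) * gc + 1) (fun j => ((2:ℝ)^j - 1) * gr + 1) i j = G i j := by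
  intro i
  induction i with
  | zero =>
    intro j
    cases j with
    | zero => simp [pascalEntry, G_left 0]
    | succ j => simp only [pascalEntry, G_right (j+1)]
  | succ i ih =>
    intro j
    induction j with
    | zero => simp only [pascalEntry, G_left (i+1)]
    | succ j ihj =>
      rw [show pascalEntry (fun i => ((2:ℝ)^i - 1) * gc + 1) (fun j => ((2:ℝ)^j - 1) * gr + 1)
            (i+1) (j+1)
          = pascalEntry (fun i => ((2:ℝ)^i - 1) * gc + 1) (fun j => ((2:ℝ)^j - 1) * gr + 1)
            i (j+1)
          + pascalEntry (fun i => ((2:ℝ)^i - 1) * gc + 1) (fun j => ((2:ℝ)^j - 1) * gr + 1)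
            (i+1) j from by simp [pascalEntry]]
      rw [ih (j+1), ihj, G_rec]




/-- ℕ-indexed entries of the triangular factors -/
def lm : ℕ → ℕ → ℝ := fun i l =>
  if i = l then 1 else if l < i then gc ^ (l+1) / (Nat.fib (l+2) : ℝ) else 0
def um : ℕ → ℕ → ℝ := fun l j =>
  if l = j then 1 else if l < j then gr ^ (l+1) / (Nat.fib (l+2) : ℝ) else 0
def dd : ℕ → ℝ := fun l => (Nat.fib (l+2) : ℝ) / (Nat.fib (l+1) : ℝ)

def LM (n : ℕ) : Matrix (Fin n) (Fin n) ℝ := Matrix.of fun i j => lm (i : ℕ) (j : ℕ)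
def UM (n : ℕ) : Matrix (Fin n) (Fin n) ℝ := Matrix.of fun i j => um (i : ℕ) (j : ℕ)
def DM (n : ℕ) : Matrix (Fin n) (Fin n) ℝ := Matrix.diagonal fun k : Fin n => dd (k : ℕ)

def fc : ℕ → ℝ := fun l => gc ^ (l+1) / (Nat.fib (l+1) : ℝ)
def fr : ℕ → ℝ := fun l => gr ^ (l+1) / (Nat.fib (l+1) : ℝ)

lemma off_term (l : ℕ) :
    gc ^ (l+1) / (Nat.fib (l+2) : ℝ) * dd l * (gr ^ (l+1) / (Nat.fib (l+2) : ℝ))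
      = fc l - fc (l+1) := by
  unfold dd fc
  have h2 : (Nat.fib (l+2) : ℝ) = gc * (Nat.fib (l+1) : ℝ) + gr ^ (l+1) := binet2 (l+1)
  field_simp [fibR_ne l, fibR_ne (l+1)]
  linear_combination (-(gc * gc^l)) * h2

lemma off_term' (l : ℕ) :
    gc ^ (l+1) / (Nat.fib (l+2) : ℝ) * dd l * (gr ^ (l+1) / (Nat.fib (l+2) : ℝ))
      = fr l - fr (l+1) := by
  unfold dd fr
  have h2 : (Nat.fib (l+2) : ℝ) = gr * (Nat.fib (l+1) : ℝ) + gc ^ (l+1) := binet1 (l+1)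
  field_simp [fibR_ne l, fibR_ne (l+1)]
  linear_combination (-(gr * gr^l)) * h2

lemma lm_zero {i l : ℕ} (h : i < l) : lm i l = 0 := by
  unfold lm
  rw [if_neg (by omega), if_neg (by omega)]

lemma um_zero {l j : ℕ} (h : j < l) : um l j = 0 := by
  unfold um
  rw [if_neg (by omega), if_neg (by omega)]

lemma fr_zero : fr 0 = gr := by simp [fr]
lemma fc_zero : fc 0 = gc := by simp [fc]

lemma sum_lm_dd_um {n i j : ℕ} (hi : i < n) (hj : j < n) :
    ∑ l ∈ Finset.range n, lm i l * dd l * um l j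
      = if j ≤ i then a (i - j) else b (j - i) := by
  have hmin : min i j + 1 ≤ n := by omega
  have hshrink : ∑ l ∈ Finset.range n, lm i l * dd l * um l j
      = ∑ l ∈ Finset.range (min i j + 1), lm i l * dd l * um l j := by
    symm
    apply Finset.sum_subset (Finset.range_subset_range.mpr hmin)
    intro l hl hl2
    rw [Finset.mem_range] at hl hl2
    rcases Nat.lt_or_ge i l with h | h
    · rw [lm_zero h]; ring
    · have : j < l := by omega
      rw [um_zero this]; ring
  rw [hshrink]
  rcases lt_trichotomy i j with h | h | h
  · -- i < j : min = i, answer gr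
    have hm : min i j = i := by omega
    rw [hm, Finset.sum_range_succ]
    have hlast : lm i i * dd i * um i j = fr i := by
      unfold lm um dd fr
      rw [if_pos rfl, if_neg (by omega), if_pos h]
      field_simp [fibR_ne i, fibR_ne (i+1)]
    have hoff : ∀ l ∈ Finset.range i, lm i l * dd l * um l j = fr l - fr (l+1) := by
      intro l hl
      rw [Finset.mem_range] at hl
      have h1 : lm i l = gc ^ (l+1) / (Nat.fib (l+2) : ℝ) := by
        unfold lm; rw [if_neg (by omega), if_pos hl]
      have h2 : um l j = gr ^ (l+1) / (Nat.fib (l+2) : ℝ) := by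
        unfold um; rw [if_neg (by omega), if_pos (by omega)]
      rw [h1, h2, off_term' l]
    rw [Finset.sum_congr rfl hoff, Finset.sum_range_sub' fr i, hlast, fr_zero]
    rw [if_neg (by omega)]
    unfold b
    rw [if_neg (by omega)]
    ring
  · -- i = j : answer 1
    subst h
    have hm : min i i = i := by omega
    rw [hm, Finset.sum_range_succ]
    have hlast : lm i i * dd i * um i i = dd i := by
      unfold lm um; rw [if_pos rfl, if_pos rfl]; ring
    have hoff : ∀ l ∈ Finset.range i, lm i l * dd l * um l i = fc l - fc (l+1) := by
      intro l hl
      rw [Finset.mem_range] at hl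
      have h1 : lm i l = gc ^ (l+1) / (Nat.fib (l+2) : ℝ) := by
        unfold lm; rw [if_neg (by omega), if_pos hl]
      have h2 : um l i = gr ^ (l+1) / (Nat.fib (l+2) : ℝ) := by
        unfold um; rw [if_neg (by omega), if_pos hl]
      rw [h1, h2, off_term l]
    rw [Finset.sum_congr rfl hoff, Finset.sum_range_sub' fc i, hlast, fc_zero]
    rw [if_pos le_rfl]
    unfold a
    rw [Nat.sub_self, if_pos rfl]
    unfold fc dd
    have hb : (Nat.fib (i+2) : ℝ) = gr * (Nat.fib (i+1) : ℝ) + gc ^ (i+1) := binet1 (i+1)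
    have hs : gr + gc = 1 := gr_add_gc
    field_simp [fibR_ne i]
    linear_combination hb + (Nat.fib (i+1) : ℝ) * hs
  · -- j < i : min = j, answer gc
    have hm : min i j = j := by omega
    rw [hm, Finset.sum_range_succ]
    have hlast : lm i j * dd j * um j j = fc j := by
      unfold lm um dd fc
      rw [if_neg (by omega), if_pos h, if_pos rfl]
      field_simp [fibR_ne j, fibR_ne (j+1)]
    have hoff : ∀ l ∈ Finset.range j, lm i l * dd l * um l j = fc l - fc (l+1) := by
      intro l hl
      rw [Finset.mem_range] at hl
      have h1 : lm i l = gc ^ (l+1) / (Nat.fib (l+2) : ℝ) := by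
        unfold lm; rw [if_neg (by omega), if_pos (by omega)]
      have h2 : um l j = gr ^ (l+1) / (Nat.fib (l+2) : ℝ) := by
        unfold um; rw [if_neg (by omega), if_pos hl]
      rw [h1, h2, off_term l]
    rw [Finset.sum_congr rfl hoff, Finset.sum_range_sub' fc j, hlast, fc_zero]
    rw [if_pos (le_of_lt h)]
    unfold a
    rw [if_neg (by omega)]
    ring

lemma toeplitz_fact (n : ℕ) : toeplitz a b n = LM n * DM n * UM n := by
  ext i j
  rw [Matrix.mul_apply]
  simp only [DM, Matrix.mul_diagonal]
  have : ∀ x : Fin n, (LM n) i x * dd (x : ℕ) * (UM n) x j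
      = lm (i : ℕ) (x : ℕ) * dd (x : ℕ) * um (x : ℕ) (j : ℕ) := fun x => rfl
  rw [Finset.sum_congr rfl fun x _ => this x]
  rw [Fin.sum_univ_eq_sum_range (fun l => lm (i : ℕ) l * dd l * um l (j : ℕ)) n]
  rw [sum_lm_dd_um i.isLt j.isLt]
  rfl

lemma det_LM (n : ℕ) : (LM n).det = 1 := by
  rw [Matrix.det_of_lowerTriangular (LM n) (fun i j hij => ?_)]
  · exact Finset.prod_eq_one fun i _ => by simp [LM, lm]
  · exact lm_zero (by exact_mod_cast hij)

lemma det_UM (n : ℕ) : (UM n).det = 1 := by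
  rw [Matrix.det_of_upperTriangular (fun i j hij => ?_)]
  · exact Finset.prod_eq_one fun i _ => by simp [UM, um]
  · exact um_zero (by exact_mod_cast hij)

lemma det_DM (n : ℕ) : (DM n).det = (Nat.fib (n+1) : ℝ) := by
  rw [DM, Matrix.det_diagonal, ← prod_fib_ratio n,
    Fin.prod_univ_eq_prod_range (fun l => dd l) n]
  rfl

lemma det_toeplitz (n : ℕ) : (toeplitz a b n).det = (Nat.fib (n+1) : ℝ) := by
  rw [toeplitz_fact n, Matrix.det_mul, Matrix.det_mul, det_LM, det_UM, det_DM]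
  ring



lemma lowerL_apply {n : ℕ} (i j : Fin n) :
    lowerL ℝ n i j = (((i : ℕ).choose (j : ℕ) : ℝ)) := by
  unfold lowerL
  simp only [Matrix.of_apply]
  split
  · rfl
  · rw [Nat.choose_eq_zero_of_lt (by omega)]
    simp

lemma shrink {m n : ℕ} (h : m < n) (u : ℕ → ℝ) :
    ∑ k ∈ Finset.range n, (m.choose k : ℝ) * u k
      = ∑ k ∈ Finset.range (m+1), (m.choose k : ℝ) * u k := by
  symm
  apply Finset.sum_subset (Finset.range_subset_range.mpr (by omega))
  intro k hk hk2
  rw [Finset.mem_range] at hk hk2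
  rw [Nat.choose_eq_zero_of_lt (by omega)]
  simp

lemma genPascal_fact (n : ℕ) :
    genPascal (fun i => ((2:ℝ)^i - 1) * gc + 1) (fun j => ((2:ℝ)^j - 1) * gr + 1) n
      = lowerL ℝ n * toeplitz a b n * (lowerL ℝ n)ᵀ := by
  ext i j
  show pascalEntry _ _ (i : ℕ) (j : ℕ) = _
  rw [pascal_eq_G]
  rw [Matrix.mul_apply]
  have hout : ∀ x : Fin n, (lowerL ℝ n * toeplitz a b n) i x * (lowerL ℝ n)ᵀ x j
      = (∑ k ∈ Finset.range n, (((i:ℕ).choose k : ℝ)) * t k (x:ℕ)) * (((j:ℕ).choose (x:ℕ) : ℝ)) := by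
    intro x
    rw [Matrix.transpose_apply, lowerL_apply, Matrix.mul_apply]
    congr 1
    have : ∀ k : Fin n, lowerL ℝ n i k * toeplitz a b n k x
        = (((i:ℕ).choose (k:ℕ) : ℝ)) * t (k:ℕ) (x:ℕ) := by
      intro k
      rw [lowerL_apply]
      rfl
    rw [Finset.sum_congr rfl fun k _ => this k]
    exact Fin.sum_univ_eq_sum_range (fun k => (((i:ℕ).choose k : ℝ)) * t k (x:ℕ)) n
  rw [Finset.sum_congr rfl fun x _ => hout x]
  rw [Fin.sum_univ_eq_sum_range
    (fun l => (∑ k ∈ Finset.range n, (((i:ℕ).choose k : ℝ)) * t k l) * (((j:ℕ).choose l : ℝ))) n]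
  have swap : ∑ l ∈ Finset.range n,
        (∑ k ∈ Finset.range n, (((i:ℕ).choose k : ℝ)) * t k l) * (((j:ℕ).choose l : ℝ))
      = ∑ k ∈ Finset.range n, (((i:ℕ).choose k : ℝ)) *
          ∑ l ∈ Finset.range n, (((j:ℕ).choose l : ℝ)) * t k l := by
    simp only [Finset.sum_mul]
    rw [Finset.sum_comm]
    refine Finset.sum_congr rfl fun k _ => ?_
    rw [Finset.mul_sum]
    refine Finset.sum_congr rfl fun l _ => by ring
  rw [swap]
  rw [shrink i.isLt (fun k => ∑ l ∈ Finset.range n, (((j:ℕ).choose l : ℝ)) * t k l)]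
  unfold G
  refine Finset.sum_congr rfl fun k _ => ?_
  congr 1
  exact (shrink j.isLt (fun l => t k l)).symm

lemma det_lowerL (n : ℕ) : (lowerL ℝ n).det = 1 := by
  rw [Matrix.det_of_lowerTriangular (lowerL ℝ n) (fun i j hij => ?_)]
  · exact Finset.prod_eq_one fun i _ => by simp [lowerL]
  · unfold lowerL
    have : (i : ℕ) < (j : ℕ) := hij
    simp only [Matrix.of_apply]
    rw [if_neg (by omega)]


end DGG

open DGG in
/-- with `φ = (1+√5)/2` and `Φ = (1-√5)/2`, for `α_i = (2^i - 1)Φ + 1`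
and `β_i = (2^i - 1)φ + 1`, `det(P_{α,β}(n)) = F(n+1)`. -/
theorem det_genPascal_golden (n : ℕ) (hn : 0 < n) :
    (genPascal (fun i => ((2 : ℝ) ^ i - 1) * ((1 - Real.sqrt 5) / 2) + 1)
        (fun i => ((2 : ℝ) ^ i - 1) * ((1 + Real.sqrt 5) / 2) + 1) n).det =
      (Nat.fib (n + 1) : ℝ) := by
  have e : (genPascal (fun i => ((2 : ℝ) ^ i - 1) * ((1 - Real.sqrt 5) / 2) + 1)
        (fun i => ((2 : ℝ) ^ i - 1) * ((1 + Real.sqrt 5) / 2) + 1) n)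
      = genPascal (fun i => ((2:ℝ)^i - 1) * gc + 1) (fun j => ((2:ℝ)^j - 1) * gr + 1) n := rfl
  rw [e, genPascal_fact n, Matrix.det_mul, Matrix.det_mul, Matrix.det_transpose,
    det_lowerL, det_toeplitz]
  ring
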